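/- For the matrix factorisation D_a = [[0, x^{n-a}],[-x^a, 0]] of -x^n, the matrices e_i = x^i·I₂ for 0 ≤ i ≤ min(a-1, n-a-1) are even cocycles: [D_a, e_i] = D_a e_i - e_i D_a = 0, and they are linearly independent over ℂ in the cohomology of the BRST differential d(φ) = D_aφ - (-1)^{|φ|}φD_a, i.e. no nontrivial ℂ-linear combination of them lies in the image of d. -/
import Mathlib


open Polynomial

/-- For the matrix factorisation `D_a = [[0, x^{n-a}],[-x^a, 0]]` of `-xⁿ`,
the even matrices `e_i = xⁱ·1` for `0 ≤ i ≤ min(a-1, n-a-1)` are cocycles,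
`[D_a, e_i] = 0`, and they are linearly independent in BRST cohomology: if a ℂ-linear
combination of them lies in the image of the differential on odd elements
`φ ↦ D_a φ + φ D_a`, then all coefficients vanish. -/
theorem stmt9 (n a : ℕ) (h1 : 1 ≤ a) (h2 : a ≤ n - 1) :
    (∀ i : ℕ, i ≤ min (a - 1) (n - a - 1) →
      !![0, (X : ℂ[X]) ^ (n - a); -(X ^ a), 0] * ((X ^ i : ℂ[X]) • 1)
        = ((X ^ i : ℂ[X]) • 1) * !![0, (X : ℂ[X]) ^ (n - a); -(X ^ a), 0]) ∧
    (∀ c : Fin (min a (n - a)) → ℂ, ∀ p q : ℂ[X],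
      (∑ i : Fin (min a (n - a)),
          (C (c i) * X ^ (i : ℕ)) • (1 : Matrix (Fin 2) (Fin 2) ℂ[X]))
        = !![0, (X : ℂ[X]) ^ (n - a); -(X ^ a), 0] * !![0, p; q, 0]
          + !![0, p; q, 0] * !![0, (X : ℂ[X]) ^ (n - a); -(X ^ a), 0] →
      ∀ i, c i = 0) := by
  constructor
  · intro i _
    rw [Matrix.mul_smul, Matrix.smul_mul, mul_one, one_mul]
  · intro c p q heq i
    have hi1 : (i : ℕ) < n - a := lt_of_lt_of_le i.2 (min_le_right _ _)
    have hi2 : (i : ℕ) < a := lt_of_lt_of_le i.2 (min_le_left _ _)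
    have h00 := congrArg (fun M : Matrix (Fin 2) (Fin 2) ℂ[X] => M 0 0) heq
    simp only [Matrix.sum_apply, Matrix.smul_apply, Matrix.one_apply_eq, smul_eq_mul,
      mul_one, Matrix.add_apply, Matrix.mul_apply, Fin.sum_univ_two,
      Matrix.of_apply, Matrix.cons_val', Matrix.cons_val_zero, Matrix.cons_val_one,
      Matrix.head_cons, Matrix.empty_val', Matrix.cons_val_fin_one,
      Matrix.head_fin_const, zero_mul, mul_zero, zero_add, add_zero] at h00
    -- h00 : ∑ j, C (c j) * X ^ (j:ℕ) = X^(n-a) * q + p * -X^a (roughly)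
    have hc := congrArg (fun r : ℂ[X] => r.coeff i) h00
    simp only [finset_sum_coeff, coeff_C_mul, coeff_X_pow] at hc
    rw [Finset.sum_eq_single i] at hc
    · simp only [eq_self_iff_true, if_true, mul_one] at hc
      rw [hc]
      have e1 : ((X : ℂ[X]) ^ (n - a) * q).coeff i = 0 := by
        rw [mul_comm, coeff_mul_X_pow']
        simp [Nat.not_le_of_lt hi1]
      have e2 : ∀ r : ℂ[X], ((X : ℂ[X]) ^ a * r).coeff i = 0 := by
        intro r
        rw [mul_comm, coeff_mul_X_pow']
        simp [Nat.not_le_of_lt hi2]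
      rw [coeff_add, mul_neg, coeff_neg, mul_comm p, e1, e2, neg_zero, add_zero]
    · intro j _ hj
      rw [if_neg, mul_zero]
      exact fun h => hj (Fin.val_injective h.symm)
    · simp
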